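/- arXiv:2011.07278 — 4 statements merged into one kernel-verified Lean document; each statement's English description precedes it below -/
import Mathlib

section
/- Let Ψ be a series-parallel expression in which each variable occurs at most once, with n variables, α the SP-order it generates, and α* the SP-order generated by the dual expression Ψ* obtained by swapping all series and parallel operations. Then the number of linear extensions of α times the number of linear extensions of α* equals n!. -/
/-- Series-parallel expressions: each leaf is a distinct variable. -/
inductive SP where
  | leaf : SP
  | ser : SP → SP → SP
  | par : SP → SP → SP

/-- The set of elements (variables) of an SP-expression. -/
def SP.carrier : SP → Type
  | .leaf => Unit
  | .ser a b => a.carrier ⊕ b.carrier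
  | .par a b => a.carrier ⊕ b.carrier

/-- The partial order generated by an SP-expression. -/
def SP.le : (s : SP) → s.carrier → s.carrier → Prop
  | .leaf, _, _ => True
  | .ser a _, .inl x, .inl y => a.le x y
  | .ser _ b, .inr x, .inr y => b.le x y
  | .ser _ _, .inl _, .inr _ => True
  | .ser _ _, .inr _, .inl _ => False
  | .par a _, .inl x, .inl y => a.le x y
  | .par _ b, .inr x, .inr y => b.le x y
  | .par _ _, .inl _, .inr _ => False
  | .par _ _, .inr _, .inl _ => False

/-- Number of variables of an SP-expression. -/
def SP.size : SP → ℕ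
  | .leaf => 1
  | .ser a b => a.size + b.size
  | .par a b => a.size + b.size

instance SP.fintypeCarrier : (s : SP) → Fintype s.carrier
  | .leaf => inferInstanceAs (Fintype Unit)
  | .ser a b =>
      letI := fintypeCarrier a; letI := fintypeCarrier b
      inferInstanceAs (Fintype (a.carrier ⊕ b.carrier))
  | .par a b =>
      letI := fintypeCarrier a; letI := fintypeCarrier b
      inferInstanceAs (Fintype (a.carrier ⊕ b.carrier))

/-- Dual expression: interchange series and parallel. -/
def SP.dual : SP → SP
  | .leaf => .leaf
  | .ser a b => .par a.dual b.dual
  | .par a b => .ser a.dual b.dual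

/-- The canonical identification of elements of `s` with elements of `s.dual`. -/
def SP.dualEquiv : (s : SP) → s.carrier ≃ s.dual.carrier
  | .leaf => Equiv.refl _
  | .ser a b => Equiv.sumCongr a.dualEquiv b.dualEquiv
  | .par a b => Equiv.sumCongr a.dualEquiv b.dualEquiv

/-- Number of linear extensions of (the strict part of) relation `le` on a finite set `X`:
bijections to `{1,…,n}` strictly monotone with respect to the order. -/
noncomputable def linExtCount (X : Type) [Fintype X] (le : X → X → Prop) : ℕ :=
  Nat.card {f : X ≃ Fin (Fintype.card X) // ∀ x y : X, le x y → x ≠ y → f x < f y}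

/-- Number of linear extensions of the poset generated by an SP-expression. -/
noncomputable def SP.numLE (s : SP) : ℕ := linExtCount s.carrier s.le

section Generic

variable {A B : Type} [Fintype A] [Fintype B]

/-- Combined relation on a sum: `c` is the cross relation from left to right. -/
def sumLe (c : Prop) (la : A → A → Prop) (lb : B → B → Prop) : A ⊕ B → A ⊕ B → Prop
  | .inl x, .inl y => la x y
  | .inr x, .inr y => lb x y
  | .inl _, .inr _ => c
  | .inr _, .inl _ => False

def IsExt {X : Type} {n : ℕ} (le : X → X → Prop) (f : X ≃ Fin n) : Prop :=
  ∀ x y, le x y → x ≠ y → f x < f y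

def Mono {k m n : ℕ} (e : Fin k ⊕ Fin m ≃ Fin n) : Prop :=
  StrictMono (fun i => e (.inl i)) ∧ StrictMono (fun j => e (.inr j))

def Cross {k m n : ℕ} (c : Prop) (e : Fin k ⊕ Fin m ≃ Fin n) : Prop :=
  ∀ i j, c → e (.inl i) < e (.inr j)

/-- decomposition map -/
def theta (t : {e : Fin (Fintype.card A) ⊕ Fin (Fintype.card B) ≃ Fin (Fintype.card (A ⊕ B)) // Mono e}
    × (A ≃ Fin (Fintype.card A)) × (B ≃ Fin (Fintype.card B))) : A ⊕ B ≃ Fin (Fintype.card (A ⊕ B)) :=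
  (Equiv.sumCongr t.2.1 t.2.2).trans t.1.1

theorem theta_inj : Function.Injective (theta (A := A) (B := B)) := by
  rintro ⟨⟨e, he⟩, g, h⟩ ⟨⟨e', he'⟩, g', h'⟩ heq
  have hpt : ∀ z : A ⊕ B, e (Equiv.sumCongr g h z) = e' (Equiv.sumCongr g' h' z) := by
    intro z; exact congrArg (fun (F : A ⊕ B ≃ _) => F z) heq
  have hl : ∀ x : A, e (Sum.inl (g x)) = e' (Sum.inl (g' x)) := fun x => hpt (Sum.inl x)
  have hr : ∀ y : B, e (Sum.inr (h y)) = e' (Sum.inr (h' y)) := fun y => hpt (Sum.inr y)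
  have hrangel : Set.range (fun i => e (Sum.inl i)) = Set.range (fun i => e' (Sum.inl i)) := by
    rw [← g.surjective.range_comp (fun i => e (Sum.inl i)),
        ← g'.surjective.range_comp (fun i => e' (Sum.inl i))]
    exact congrArg Set.range (funext hl)
  have hranger : Set.range (fun j => e (Sum.inr j)) = Set.range (fun j => e' (Sum.inr j)) := by
    rw [← h.surjective.range_comp (fun j => e (Sum.inr j)),
        ← h'.surjective.range_comp (fun j => e' (Sum.inr j))]
    exact congrArg Set.range (funext hr)
  haveI : WellFoundedLT (Fin (Fintype.card A)) := inferInstance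
  haveI : WellFoundedLT (Fin (Fintype.card B)) := inferInstance
  have hel : (fun i => e (Sum.inl i)) = (fun i => e' (Sum.inl i)) :=
    (@StrictMono.range_inj (Fin (Fintype.card A)) (Fin (Fintype.card (A ⊕ B))) _ _ _ _ _ he.1 he'.1).mp hrangel
  have her : (fun j => e (Sum.inr j)) = (fun j => e' (Sum.inr j)) :=
    (@StrictMono.range_inj (Fin (Fintype.card B)) (Fin (Fintype.card (A ⊕ B))) _ _ _ _ _ he.2 he'.2).mp hranger
  have hee : e = e' := by
    refine Equiv.ext fun z => ?_
    cases z with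
    | inl i => exact congrFun hel i
    | inr j => exact congrFun her j
  subst hee
  have hg : g = g' := by
    refine Equiv.ext fun x => ?_
    exact Sum.inl_injective (e.injective (hl x))
  have hh : h = h' := by
    refine Equiv.ext fun y => ?_
    exact Sum.inr_injective (e.injective (hr y))
  subst hg; subst hh
  rfl

theorem theta_surj : Function.Surjective (theta (A := A) (B := B)) := by
  classical
  intro f
  have hnkm : Fintype.card (A ⊕ B) = Fintype.card A + Fintype.card B := Fintype.card_sum
  set S : Finset (Fin (Fintype.card (A ⊕ B))) :=
    Finset.univ.image (fun x : A => f (Sum.inl x)) with hS'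
  have hinj : Function.Injective (fun x : A => f (Sum.inl x)) :=
    f.injective.comp Sum.inl_injective
  have hS : S.card = Fintype.card A := by
    rw [hS', Finset.card_image_of_injective _ hinj, Finset.card_univ]
  have hSc : Sᶜ.card = Fintype.card B := by
    rw [Finset.card_compl, hS, Fintype.card_fin, hnkm]
    omega
  have hmemS : ∀ x : A, f (Sum.inl x) ∈ S := by
    intro x; exact Finset.mem_image.mpr ⟨x, Finset.mem_univ x, rfl⟩
  have hmemSc : ∀ y : B, f (Sum.inr y) ∈ Sᶜ := by
    intro y
    rw [Finset.mem_compl]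
    intro hmem
    obtain ⟨x, -, hx⟩ := Finset.mem_image.mp hmem
    exact (Sum.inl_ne_inr (f.injective hx)).elim
  set eS := S.orderIsoOfFin hS with heS'
  set eC := Sᶜ.orderIsoOfFin hSc with heC'
  set e : Fin (Fintype.card A) ⊕ Fin (Fintype.card B) ≃ Fin (Fintype.card (A ⊕ B)) :=
    (Equiv.sumCongr eS.toEquiv
      (eC.toEquiv.trans (Equiv.subtypeEquivRight (fun x => Finset.mem_compl)))).trans
      (Equiv.sumCompl (· ∈ S)) with he'
  have heinl : ∀ i, e (Sum.inl i) = (eS i : Fin (Fintype.card (A ⊕ B))) := by intro i; rfl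
  have heinr : ∀ j, e (Sum.inr j) = (eC j : Fin (Fintype.card (A ⊕ B))) := by intro j; rfl
  have hMono : Mono e := by
    constructor
    · intro i j hij
      simp only [heinl]
      exact Subtype.coe_lt_coe.mpr (eS.strictMono hij)
    · intro i j hij
      simp only [heinr]
      exact Subtype.coe_lt_coe.mpr (eC.strictMono hij)
  have hgbij : Function.Bijective (fun x : A => eS.symm ⟨f (Sum.inl x), hmemS x⟩) := by
    rw [Fintype.bijective_iff_injective_and_card]
    constructor
    · intro x y hxy
      have h2 := congrArg eS hxy
      simp only [OrderIso.apply_symm_apply] at h2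
      have h3 : f (Sum.inl x) = f (Sum.inl y) := congrArg Subtype.val h2
      exact Sum.inl_injective (f.injective h3)
    · simp
  have hhbij : Function.Bijective (fun y : B => eC.symm ⟨f (Sum.inr y), hmemSc y⟩) := by
    rw [Fintype.bijective_iff_injective_and_card]
    constructor
    · intro x y hxy
      have h2 := congrArg eC hxy
      simp only [OrderIso.apply_symm_apply] at h2
      have h3 : f (Sum.inr x) = f (Sum.inr y) := congrArg Subtype.val h2
      exact Sum.inr_injective (f.injective h3)
    · simp
  refine ⟨⟨⟨e, hMono⟩, Equiv.ofBijective _ hgbij, Equiv.ofBijective _ hhbij⟩, ?_⟩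
  refine Equiv.ext fun z => ?_
  cases z with
  | inl x =>
    simp only [theta, Equiv.trans_apply, Equiv.sumCongr_apply, Sum.map_inl,
      Equiv.ofBijective_apply, Function.comp_apply]
    rw [heinl, OrderIso.apply_symm_apply]
  | inr y =>
    simp only [theta, Equiv.trans_apply, Equiv.sumCongr_apply, Sum.map_inr,
      Equiv.ofBijective_apply, Function.comp_apply]
    rw [heinr, OrderIso.apply_symm_apply]

theorem isExt_theta (c : Prop) (la : A → A → Prop) (lb : B → B → Prop)
    (t : {e : Fin (Fintype.card A) ⊕ Fin (Fintype.card B) ≃ Fin (Fintype.card (A ⊕ B)) // Mono e}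
      × (A ≃ Fin (Fintype.card A)) × (B ≃ Fin (Fintype.card B))) :
    IsExt (sumLe c la lb) (theta t) ↔ Cross c t.1.1 ∧ IsExt la t.2.1 ∧ IsExt lb t.2.2 := by
  obtain ⟨⟨e, he⟩, g, h⟩ := t
  constructor
  · intro H
    refine ⟨?_, ?_, ?_⟩
    · intro i j hc
      have := H (Sum.inl (g.symm i)) (Sum.inr (h.symm j)) hc (by simp)
      simpa [theta] using this
    · intro x y hxy hne
      have := H (Sum.inl x) (Sum.inl y) hxy (by simpa)
      simp only [theta] at this
      exact he.1.lt_iff_lt.mp (by simpa using this)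
    · intro x y hxy hne
      have := H (Sum.inr x) (Sum.inr y) hxy (by simpa)
      simp only [theta] at this
      exact he.2.lt_iff_lt.mp (by simpa using this)
  · rintro ⟨hc, hg, hh⟩ x y hxy hne
    cases x with
    | inl x =>
      cases y with
      | inl y =>
        have : g x < g y := hg x y hxy (by rintro rfl; exact hne rfl)
        simpa [theta] using he.1 this
      | inr y =>
        simpa [theta] using hc (g x) (h y) hxy
    | inr x =>
      cases y with
      | inl y => exact hxy.elim
      | inr y =>
        have : h x < h y := hh x y hxy (by rintro rfl; exact hne rfl)
        simpa [theta] using he.2 this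

theorem card_ext_sum (c : Prop) (la : A → A → Prop) (lb : B → B → Prop) :
    linExtCount (A ⊕ B) (sumLe c la lb) =
      Nat.card {e : Fin (Fintype.card A) ⊕ Fin (Fintype.card B) ≃ Fin (Fintype.card (A ⊕ B)) //
          Mono e ∧ Cross c e} *
        (linExtCount A la * linExtCount B lb) := by
  unfold linExtCount
  rw [← Nat.card_prod, ← Nat.card_prod]
  apply Nat.card_congr
  refine Equiv.symm (Equiv.ofBijective
    (fun t : {e : Fin (Fintype.card A) ⊕ Fin (Fintype.card B) ≃ Fin (Fintype.card (A ⊕ B)) //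
          Mono e ∧ Cross c e}
        × {g : A ≃ Fin (Fintype.card A) // ∀ x y, la x y → x ≠ y → g x < g y}
        × {h : B ≃ Fin (Fintype.card B) // ∀ x y, lb x y → x ≠ y → h x < h y} =>
      (⟨theta (⟨t.1.1, t.1.2.1⟩, t.2.1.1, t.2.2.1),
        (isExt_theta c la lb _).mpr ⟨t.1.2.2, t.2.1.2, t.2.2.2⟩⟩ :
        {f : (A ⊕ B) ≃ Fin (Fintype.card (A ⊕ B)) // ∀ x y, sumLe c la lb x y → x ≠ y → f x < f y}))
    ⟨?_, ?_⟩)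
  · rintro ⟨⟨e, he⟩, ⟨g, hg⟩, ⟨h, hh⟩⟩ ⟨⟨e', he'⟩, ⟨g', hg'⟩, ⟨h', hh'⟩⟩ heq
    have h0 := theta_inj (Subtype.ext_iff.mp heq)
    have he2 : e = e' := congrArg (fun t => t.1.1) h0
    have hg2 : g = g' := congrArg (fun t => t.2.1) h0
    have hh2 : h = h' := congrArg (fun t => t.2.2) h0
    subst he2; subst hg2; subst hh2
    rfl
  · rintro ⟨f, hf⟩
    obtain ⟨⟨⟨e, he⟩, g, h⟩, rfl⟩ := theta_surj f
    have hx := (isExt_theta c la lb _).mp hf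
    exact ⟨⟨⟨e, he, hx.1⟩, ⟨g, hx.2.1⟩, ⟨h, hx.2.2⟩⟩, rfl⟩

end Generic

section Counting

theorem linExtCount_triv (X : Type) [Fintype X] (le : X → X → Prop)
    (h : ∀ x y, le x y → x = y) : linExtCount X le = (Fintype.card X).factorial := by
  classical
  unfold linExtCount
  rw [Nat.card_congr (Equiv.subtypeUnivEquiv
    (fun f x y hxy hne => absurd (h x y hxy) hne))]
  rw [Nat.card_eq_fintype_card, Fintype.card_equiv (Fintype.equivFin X)]

theorem mem_inl_iff {k m n : ℕ} (e : Fin k ⊕ Fin m ≃ Fin n)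
    (hC : ∀ (i : Fin k) (j : Fin m), e (Sum.inl i) < e (Sum.inr j)) (x : Fin n) :
    (∃ i, e (Sum.inl i) = x) ↔ (x : ℕ) < k := by
  classical
  set S : Finset (Fin n) := Finset.univ.image (fun i : Fin k => e (Sum.inl i)) with hS'
  have hcard : S.card = k := by
    rw [hS', Finset.card_image_of_injective _
        (fun i j hij => Sum.inl_injective (e.injective hij) : Function.Injective
          (fun i : Fin k => e (Sum.inl i))),
      Finset.card_univ, Fintype.card_fin]
  have hmem : ∀ x : Fin n, x ∈ S ↔ ∃ i, e (Sum.inl i) = x := by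
    intro x
    simp [hS', Finset.mem_image]
  have hout : ∀ x : Fin n, x ∉ S → ∃ j, e (Sum.inr j) = x := by
    intro x hx
    rcases h2 : e.symm x with i | j
    · exact absurd ((hmem x).mpr ⟨i, by rw [← h2, Equiv.apply_symm_apply]⟩) hx
    · exact ⟨j, by rw [← h2, Equiv.apply_symm_apply]⟩
  have hlower : ∀ x ∈ S, ∀ y : Fin n, y ≤ x → y ∈ S := by
    intro x hx y hyx
    by_contra hy
    obtain ⟨j, hj⟩ := hout y hy
    obtain ⟨i, hi⟩ := (hmem x).mp hx
    have hlt := hC i j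
    rw [hi, hj] at hlt
    exact absurd (lt_of_lt_of_le hlt hyx) (lt_irrefl x)
  set T : Finset ℕ := S.image Fin.val with hT'
  have hTcard : T.card = k := by
    rw [hT', Finset.card_image_of_injective _ Fin.val_injective, hcard]
  have hTlow : ∀ a ∈ T, ∀ b, b ≤ a → b ∈ T := by
    intro a ha b hba
    obtain ⟨x, hxS, hxa⟩ := Finset.mem_image.mp ha
    have hbn : b < n := lt_of_le_of_lt (hxa ▸ hba) x.isLt
    have hbS : (⟨b, hbn⟩ : Fin n) ∈ S := by
      refine hlower x hxS ⟨b, hbn⟩ ?_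
      simp only [Fin.le_def]
      omega
    exact Finset.mem_image.mpr ⟨_, hbS, rfl⟩
  have hTsub : T ⊆ Finset.range k := by
    intro a ha
    rw [Finset.mem_range]
    by_contra hak
    push_neg at hak
    have hsub : Finset.range (a + 1) ⊆ T := by
      intro b hb
      rw [Finset.mem_range] at hb
      exact hTlow a ha b (Nat.lt_succ_iff.mp hb)
    have hle := Finset.card_le_card hsub
    rw [Finset.card_range, hTcard] at hle
    omega
  have hTeq : T = Finset.range k :=
    Finset.eq_of_subset_of_card_le hTsub (by rw [Finset.card_range, hTcard])
  constructor
  · rintro ⟨i, rfl⟩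
    have hmemT : (e (Sum.inl i)).val ∈ T :=
      Finset.mem_image.mpr ⟨_, (hmem _).mpr ⟨i, rfl⟩, rfl⟩
    rw [hTeq, Finset.mem_range] at hmemT
    exact hmemT
  · intro hx
    have hmemT : x.val ∈ T := by rw [hTeq, Finset.mem_range]; exact hx
    obtain ⟨y, hyS, hyx⟩ := Finset.mem_image.mp hmemT
    have hxy : y = x := Fin.val_injective hyx
    subst hxy
    exact (hmem y).mp hyS

theorem card_mono_cross_true {k m n : ℕ} (hn : n = k + m) :
    Nat.card {e : Fin k ⊕ Fin m ≃ Fin n // Mono e ∧ Cross True e} = 1 := by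
  subst hn
  rw [Nat.card_eq_one_iff_unique]
  constructor
  · constructor
    rintro ⟨e, he, hce⟩ ⟨e', he', hce'⟩
    have hC : ∀ (i : Fin k) (j : Fin m), e (Sum.inl i) < e (Sum.inr j) :=
      fun i j => hce i j trivial
    have hC' : ∀ (i : Fin k) (j : Fin m), e' (Sum.inl i) < e' (Sum.inr j) :=
      fun i j => hce' i j trivial
    have hrl : Set.range (fun i => e (Sum.inl i)) = Set.range (fun i => e' (Sum.inl i)) := by
      ext x
      simp only [Set.mem_range]
      rw [mem_inl_iff e hC x, mem_inl_iff e' hC' x]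
    have hinr : ∀ (E : Fin k ⊕ Fin m ≃ Fin (k + m))
        (hCe : ∀ (i : Fin k) (j : Fin m), E (Sum.inl i) < E (Sum.inr j)) (x : Fin (k + m)),
        (∃ j, E (Sum.inr j) = x) ↔ ¬ (x : ℕ) < k := by
      intro E hCe x
      constructor
      · rintro ⟨j, rfl⟩ hlt
        obtain ⟨i, hi⟩ := (mem_inl_iff E hCe _).mpr hlt
        exact Sum.inl_ne_inr (E.injective hi)
      · intro hlt
        rcases h2 : E.symm x with i | j
        · exact absurd ((mem_inl_iff E hCe x).mp
            ⟨i, by rw [← h2, Equiv.apply_symm_apply]⟩) hlt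
        · exact ⟨j, by rw [← h2, Equiv.apply_symm_apply]⟩
    have hrr : Set.range (fun j => e (Sum.inr j)) = Set.range (fun j => e' (Sum.inr j)) := by
      ext x
      simp only [Set.mem_range]
      rw [hinr e hC x, hinr e' hC' x]
    haveI : WellFoundedLT (Fin k) := inferInstance
    haveI : WellFoundedLT (Fin m) := inferInstance
    have hel : (fun i => e (Sum.inl i)) = (fun i => e' (Sum.inl i)) :=
      (@StrictMono.range_inj (Fin k) (Fin (k + m)) _ _ _ _ _ he.1 he'.1).mp hrl
    have her : (fun j => e (Sum.inr j)) = (fun j => e' (Sum.inr j)) :=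
      (@StrictMono.range_inj (Fin m) (Fin (k + m)) _ _ _ _ _ he.2 he'.2).mp hrr
    refine Subtype.ext (Equiv.ext fun z => ?_)
    cases z with
    | inl i => exact congrFun hel i
    | inr j => exact congrFun her j
  · refine ⟨⟨finSumFinEquiv, ⟨?_, ?_⟩, ?_⟩⟩
    · intro a b hab
      simp only [finSumFinEquiv_apply_left]
      exact (Fin.castAddOrderEmb m).strictMono hab
    · intro a b hab
      simp only [finSumFinEquiv_apply_right]
      exact (Fin.natAddOrderEmb k).strictMono hab
    · intro i j _
      simp only [finSumFinEquiv_apply_left, finSumFinEquiv_apply_right, Fin.lt_def,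
        Fin.coe_castAdd, Fin.coe_natAdd]
      omega

theorem card_mono_mul (A B : Type) [Fintype A] [Fintype B] :
    Nat.card {e : Fin (Fintype.card A) ⊕ Fin (Fintype.card B) ≃ Fin (Fintype.card (A ⊕ B)) //
        Mono e ∧ Cross False e} *
      ((Fintype.card A).factorial * (Fintype.card B).factorial) =
      (Fintype.card (A ⊕ B)).factorial := by
  have h := card_ext_sum False (fun _ _ : A => False) (fun _ _ : B => False)
  rw [linExtCount_triv A _ (fun x y hxy => hxy.elim),
    linExtCount_triv B _ (fun x y hxy => hxy.elim),
    linExtCount_triv (A ⊕ B) _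
      (fun x y hxy => by cases x <;> cases y <;> exact hxy.elim)] at h
  exact h.symm

theorem card_mono_mul' (A B : Type) [Fintype A] [Fintype B] {k m : ℕ}
    (hk : Fintype.card A = k) (hm : Fintype.card B = m) :
    Nat.card {e : Fin (Fintype.card A) ⊕ Fin (Fintype.card B) ≃ Fin (Fintype.card (A ⊕ B)) //
        Mono e ∧ Cross False e} *
      (k.factorial * m.factorial) = (k + m).factorial := by
  subst hk; subst hm
  rw [← Fintype.card_sum (α := A) (β := B)]
  exact card_mono_mul A B

end Counting

section SPLemmas

theorem SP.card_carrier (s : SP) : Fintype.card s.carrier = s.size := by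
  induction s with
  | leaf => rfl
  | ser a b iha ihb =>
    show Fintype.card (a.carrier ⊕ b.carrier) = a.size + b.size
    rw [Fintype.card_sum, iha, ihb]
  | par a b iha ihb =>
    show Fintype.card (a.carrier ⊕ b.carrier) = a.size + b.size
    rw [Fintype.card_sum, iha, ihb]

theorem SP.size_dual (s : SP) : s.dual.size = s.size := by
  induction s <;> simp [SP.dual, SP.size, *]

theorem SP.le_ser (a b : SP) : SP.le (.ser a b) = sumLe True a.le b.le := by
  funext x y
  cases x <;> cases y <;> rfl

theorem SP.le_par (a b : SP) : SP.le (.par a b) = sumLe False a.le b.le := by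
  funext x y
  cases x <;> cases y <;> rfl

theorem SP.numLE_ser (a b : SP) :
    (SP.ser a b).numLE =
      Nat.card {e : Fin (Fintype.card a.carrier) ⊕ Fin (Fintype.card b.carrier) ≃
          Fin (Fintype.card (a.carrier ⊕ b.carrier)) // Mono e ∧ Cross True e} *
        (a.numLE * b.numLE) := by
  have h1 : (SP.ser a b).numLE = linExtCount (a.carrier ⊕ b.carrier) (sumLe True a.le b.le) := by
    show linExtCount (a.carrier ⊕ b.carrier) (SP.le (.ser a b)) = _
    rw [SP.le_ser]
  rw [h1, card_ext_sum]
  rfl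

theorem SP.numLE_par (a b : SP) :
    (SP.par a b).numLE =
      Nat.card {e : Fin (Fintype.card a.carrier) ⊕ Fin (Fintype.card b.carrier) ≃
          Fin (Fintype.card (a.carrier ⊕ b.carrier)) // Mono e ∧ Cross False e} *
        (a.numLE * b.numLE) := by
  have h1 : (SP.par a b).numLE = linExtCount (a.carrier ⊕ b.carrier) (sumLe False a.le b.le) := by
    show linExtCount (a.carrier ⊕ b.carrier) (SP.le (.par a b)) = _
    rw [SP.le_par]
  rw [h1, card_ext_sum]
  rfl

theorem SP.numLE_leaf : (SP.leaf).numLE = 1 := by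
  have h : (SP.leaf).numLE = linExtCount Unit (SP.le .leaf) := rfl
  rw [h]
  refine (linExtCount_triv Unit (SP.le .leaf) (fun x y _ => Subsingleton.elim x y)).trans ?_
  simp

end SPLemmas

/-- For an SP-expression on `n` variables, the number of linear extensions of the
generated order times the number of linear extensions of the dual order equals `n!`. -/
theorem sp_dual_linext_product (Ψ : SP) (n : ℕ) (hn : n = Ψ.size) :
    Ψ.numLE * Ψ.dual.numLE = n.factorial := by
  subst hn
  induction Ψ with
  | leaf =>
    show SP.numLE .leaf * SP.numLE .leaf = Nat.factorial 1
    rw [SP.numLE_leaf]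
    rfl
  | ser a b iha ihb =>
    rw [show (SP.ser a b).dual = SP.par a.dual b.dual from rfl]
    rw [SP.numLE_ser a b, SP.numLE_par a.dual b.dual,
      card_mono_cross_true (Fintype.card_sum), one_mul]
    have hca : Fintype.card a.dual.carrier = a.size := by
      rw [SP.card_carrier, SP.size_dual]
    have hcb : Fintype.card b.dual.carrier = b.size := by
      rw [SP.card_carrier, SP.size_dual]
    show _ = (a.size + b.size).factorial
    calc (a.numLE * b.numLE) *
          (Nat.card {e : Fin (Fintype.card a.dual.carrier) ⊕ Fin (Fintype.card b.dual.carrier) ≃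
              Fin (Fintype.card (a.dual.carrier ⊕ b.dual.carrier)) // Mono e ∧ Cross False e} *
            (a.dual.numLE * b.dual.numLE))
        = Nat.card {e : Fin (Fintype.card a.dual.carrier) ⊕ Fin (Fintype.card b.dual.carrier) ≃
              Fin (Fintype.card (a.dual.carrier ⊕ b.dual.carrier)) // Mono e ∧ Cross False e} *
            ((a.numLE * a.dual.numLE) * (b.numLE * b.dual.numLE)) := by ring
      _ = Nat.card {e : Fin (Fintype.card a.dual.carrier) ⊕ Fin (Fintype.card b.dual.carrier) ≃
              Fin (Fintype.card (a.dual.carrier ⊕ b.dual.carrier)) // Mono e ∧ Cross False e} *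
            ((a.size).factorial * (b.size).factorial) := by rw [iha, ihb]
      _ = (a.size + b.size).factorial := card_mono_mul' a.dual.carrier b.dual.carrier hca hcb
  | par a b iha ihb =>
    rw [show (SP.par a b).dual = SP.ser a.dual b.dual from rfl]
    rw [SP.numLE_par a b, SP.numLE_ser a.dual b.dual,
      card_mono_cross_true (Fintype.card_sum), one_mul]
    have hca : Fintype.card a.carrier = a.size := SP.card_carrier a
    have hcb : Fintype.card b.carrier = b.size := SP.card_carrier b
    show _ = (a.size + b.size).factorial
    calc (Nat.card {e : Fin (Fintype.card a.carrier) ⊕ Fin (Fintype.card b.carrier) ≃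
              Fin (Fintype.card (a.carrier ⊕ b.carrier)) // Mono e ∧ Cross False e} *
            (a.numLE * b.numLE)) * (a.dual.numLE * b.dual.numLE)
        = Nat.card {e : Fin (Fintype.card a.carrier) ⊕ Fin (Fintype.card b.carrier) ≃
              Fin (Fintype.card (a.carrier ⊕ b.carrier)) // Mono e ∧ Cross False e} *
            ((a.numLE * a.dual.numLE) * (b.numLE * b.dual.numLE)) := by ring
      _ = Nat.card {e : Fin (Fintype.card a.carrier) ⊕ Fin (Fintype.card b.carrier) ≃
              Fin (Fintype.card (a.carrier ⊕ b.carrier)) // Mono e ∧ Cross False e} *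
            ((a.size).factorial * (b.size).factorial) := by rw [iha, ihb]
      _ = (a.size + b.size).factorial := card_mono_mul' a.carrier b.carrier hca hcb
end

section
/- For an SP-expression Ψ on n variables generating poset α with dual poset α*, two distinct elements are comparable in α if and only if they are incomparable in α*. In particular, the comparability graph of α* is the complement of the comparability graph of α. -/
/-- Two distinct elements are comparable in the order generated by an SP-expression iff
they are incomparable in the dual order: the comparability graph of the dual is the
complement of the comparability graph of the original. -/
theorem sp_dual_comparability_complement (Ψ : SP) (x y : Ψ.carrier) (hxy : x ≠ y) :
    (Ψ.le x y ∨ Ψ.le y x) ↔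
      ¬(Ψ.dual.le (Ψ.dualEquiv x) (Ψ.dualEquiv y) ∨
        Ψ.dual.le (Ψ.dualEquiv y) (Ψ.dualEquiv x)) := by
  induction Ψ with
  | leaf => exact absurd rfl hxy
  | ser a b iha ihb =>
      cases x with
      | inl x => cases y with
        | inl y =>
            have h := iha x y (fun h => hxy (by rw [h]))
            exact h
        | inr y => exact iff_of_true (Or.inl trivial) (fun h => h.elim id id)
      | inr x => cases y with
        | inl y => exact iff_of_true (Or.inr trivial) (fun h => h.elim id id)
        | inr y =>
            have h := ihb x y (fun h => hxy (by rw [h]))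
            exact h
  | par a b iha ihb =>
      cases x with
      | inl x => cases y with
        | inl y =>
            have h := iha x y (fun h => hxy (by rw [h]))
            exact h
        | inr y => exact iff_of_false (fun h => h.elim id id) (fun h => h (Or.inl trivial))
      | inr x => cases y with
        | inl y => exact iff_of_false (fun h => h.elim id id) (fun h => h (Or.inr trivial))
        | inr y =>
            have h := ihb x y (fun h => hxy (by rw [h]))
            exact h
end

section
/- Every poset generated by an SP-expression is N-free: it contains no four elements x, y, u, v with x ⊑ y, u ⊑ v, x ⊑ v, where u and y are incomparable, x and u are incomparable, and y and v are incomparable. -/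
/-- Strict order generated by an SP-expression. -/
def SP.lt (s : SP) (x y : s.carrier) : Prop := s.le x y ∧ x ≠ y

/-- Incomparability in the order generated by an SP-expression. -/
def SP.incomp (s : SP) (x y : s.carrier) : Prop := ¬ s.le x y ∧ ¬ s.le y x

/-- Every SP-order is N-free: it contains no four elements `x, y, u, v` with
`x < y`, `u < v`, `x < v`, where `u,y`, `x,u` and `y,v` are incomparable. -/
theorem sp_N_free (Ψ : SP) :
    ¬ ∃ x y u v : Ψ.carrier,
        Ψ.lt x y ∧ Ψ.lt u v ∧ Ψ.lt x v ∧
        Ψ.incomp u y ∧ Ψ.incomp x u ∧ Ψ.incomp y v := by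
  induction Ψ with
  | leaf =>
    rintro ⟨x, y, u, v, _, _, _, _, hxu, _⟩
    exact hxu.1 trivial
  | ser a b iha ihb =>
    rintro ⟨x | x, y | y, u | u, v | v, hxy, huv, hxv, huy, hxu, hyv⟩ <;>
      first
        | exact huy.1 trivial
        | exact huy.2 trivial
        | exact hxu.1 trivial
        | exact hxu.2 trivial
        | exact hyv.1 trivial
        | exact hyv.2 trivial
        | exact iha ⟨x, y, u, v, ⟨hxy.1, fun h => hxy.2 (congrArg _ h)⟩,
            ⟨huv.1, fun h => huv.2 (congrArg _ h)⟩,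
            ⟨hxv.1, fun h => hxv.2 (congrArg _ h)⟩, huy, hxu, hyv⟩
        | exact ihb ⟨x, y, u, v, ⟨hxy.1, fun h => hxy.2 (congrArg _ h)⟩,
            ⟨huv.1, fun h => huv.2 (congrArg _ h)⟩,
            ⟨hxv.1, fun h => hxv.2 (congrArg _ h)⟩, huy, hxu, hyv⟩
  | par a b iha ihb =>
    rintro ⟨x | x, y | y, u | u, v | v, hxy, huv, hxv, huy, hxu, hyv⟩ <;>
      first
        | exact hxy.1
        | exact huv.1
        | exact hxv.1
        | exact iha ⟨x, y, u, v, ⟨hxy.1, fun h => hxy.2 (congrArg _ h)⟩,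
            ⟨huv.1, fun h => huv.2 (congrArg _ h)⟩,
            ⟨hxv.1, fun h => hxv.2 (congrArg _ h)⟩, huy, hxu, hyv⟩
        | exact ihb ⟨x, y, u, v, ⟨hxy.1, fun h => hxy.2 (congrArg _ h)⟩,
            ⟨huv.1, fun h => huv.2 (congrArg _ h)⟩,
            ⟨hxv.1, fun h => hxv.2 (congrArg _ h)⟩, huy, hxu, hyv⟩
end

section
/- For any finite poset α of size n, the number of equivalence classes of labelings of α into the positive integers (under the relation identifying labelings with the same relative order) equals the number of linear extensions of α. -/
/-- A labeling of a finite poset `X` into a linear order `L`: an increasing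
(strictly monotone) injection. -/
def IsLabeling {X L : Type} [PartialOrder X] [LinearOrder L] (l : X → L) : Prop :=
  Function.Injective l ∧ ∀ x y : X, x < y → l x < l y

/-- Two bijections to `Fin n` inducing the same order on `X` are equal. -/
lemma equiv_fin_unique {X : Type} {n : ℕ} (f g : X ≃ Fin n)
    (h : ∀ x y : X, f x ≤ f y ↔ g x ≤ g y) : f = g := by
  have key : ∀ i : Fin n, f (g.symm i) = i := by
    let e : Fin n ≃o Fin n :=
      { toEquiv := g.symm.trans f
        map_rel_iff' := by
          intro i j
          simp only [Equiv.trans_apply]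
          rw [h]
          simp }
    have he : e = OrderIso.refl (Fin n) := Subsingleton.elim _ _
    intro i
    have := congrArg (fun (o : Fin n ≃o Fin n) => o i) he
    simpa [e] using this
  apply Equiv.ext
  intro x
  have := key (g x)
  rw [Equiv.symm_apply_apply] at this
  exact this

/-- From a labeling, the induced bijection to `Fin n`. -/
noncomputable def labelEquiv {X : Type} [PartialOrder X] [Fintype X] (l : {l : X → ℕ+ // IsLabeling l}) :
    X ≃ Fin (Fintype.card X) := by
  classical
  let s : Finset ℕ+ := Finset.univ.image l.1
  have hs : s.card = Fintype.card X := by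
    rw [Finset.card_image_of_injective _ l.2.1, Finset.card_univ]
  exact Equiv.ofBijective
    (fun x => (s.orderIsoOfFin hs).symm ⟨l.1 x, Finset.mem_image_of_mem _ (Finset.mem_univ x)⟩)
    (by
      constructor
      · intro x y hxy
        apply l.2.1
        have := congrArg (fun i => ((s.orderIsoOfFin hs) i : ℕ+)) hxy
        simpa using this
      · intro i
        have hmem : ((s.orderIsoOfFin hs) i : ℕ+) ∈ s := (s.orderIsoOfFin hs i).2
        obtain ⟨x, -, hx⟩ := Finset.mem_image.1 hmem
        refine ⟨x, ?_⟩
        apply (s.orderIsoOfFin hs).injective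
        rw [OrderIso.apply_symm_apply]
        exact Subtype.ext hx)

lemma labelEquiv_le_iff {X : Type} [PartialOrder X] [Fintype X] (l : {l : X → ℕ+ // IsLabeling l}) (x y : X) :
    labelEquiv l x ≤ labelEquiv l y ↔ l.1 x ≤ l.1 y := by
  classical
  simp only [labelEquiv, Equiv.ofBijective_apply]
  exact Iff.trans (OrderIso.le_iff_le ((Finset.univ.image l.1).orderIsoOfFin (by rw [Finset.card_image_of_injective _ l.2.1, Finset.card_univ])).symm) Iff.rfl

/-- The number of equivalence classes of labelings of a finite poset into the positive
integers (identifying labelings with the same relative order) equals the number of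
linear extensions of the poset. -/
theorem labeling_classes_eq_linext_count (X : Type) [PartialOrder X] [Fintype X] :
    Nat.card (Quot (fun l₁ l₂ : {l : X → ℕ+ // IsLabeling l} =>
        ∀ x y : X, l₁.1 x ≤ l₁.1 y ↔ l₂.1 x ≤ l₂.1 y)) =
      linExtCount X (· ≤ ·) := by
  classical
  set n := Fintype.card X
  -- the map from labelings to linear extensions
  have hΦprop : ∀ l : {l : X → ℕ+ // IsLabeling l},
      ∀ x y : X, x ≤ y → x ≠ y → labelEquiv l x < labelEquiv l y := by
    intro l x y hle hne
    have hlt : l.1 x < l.1 y := l.2.2 x y (lt_of_le_of_ne hle hne)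
    have h1 : labelEquiv l x ≤ labelEquiv l y := (labelEquiv_le_iff l x y).2 hlt.le
    have h2 : labelEquiv l x ≠ labelEquiv l y := by
      intro h
      exact hne ((labelEquiv l).injective h)
    exact lt_of_le_of_ne h1 h2
  let Φ : {l : X → ℕ+ // IsLabeling l} →
      {f : X ≃ Fin n // ∀ x y : X, x ≤ y → x ≠ y → f x < f y} :=
    fun l => ⟨labelEquiv l, hΦprop l⟩
  have hresp : ∀ l₁ l₂, (∀ x y : X, l₁.1 x ≤ l₁.1 y ↔ l₂.1 x ≤ l₂.1 y) → Φ l₁ = Φ l₂ := by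
    intro l₁ l₂ h
    apply Subtype.ext
    show labelEquiv l₁ = labelEquiv l₂
    apply equiv_fin_unique
    intro x y
    rw [labelEquiv_le_iff, labelEquiv_le_iff, h]
  let Φ' := Quot.lift Φ hresp
  have hbij : Function.Bijective Φ' := by
    constructor
    · rintro ⟨l₁⟩ ⟨l₂⟩ h
      apply Quot.sound
      intro x y
      have h' : Φ l₁ = Φ l₂ := h
      have : labelEquiv l₁ = labelEquiv l₂ := congrArg Subtype.val h'
      rw [← labelEquiv_le_iff l₁ x y, ← labelEquiv_le_iff l₂ x y, this]
    · rintro ⟨f, hf⟩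
      -- build the labeling x ↦ f x + 1
      have hlab : IsLabeling (fun x : X => (⟨(f x : ℕ) + 1, Nat.succ_pos _⟩ : ℕ+)) := by
        constructor
        · intro x y hxy
          apply f.injective
          have : (f x : ℕ) + 1 = (f y : ℕ) + 1 := congrArg PNat.val hxy
          exact Fin.ext (Nat.succ_injective this)
        · intro x y hxy
          have := hf x y hxy.le hxy.ne
          show (f x : ℕ) + 1 < (f y : ℕ) + 1
          simpa using this
      refine ⟨Quot.mk _ ⟨_, hlab⟩, ?_⟩
      show Φ ⟨_, hlab⟩ = ⟨f, hf⟩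
      apply Subtype.ext
      show labelEquiv ⟨_, hlab⟩ = f
      apply equiv_fin_unique
      intro x y
      rw [labelEquiv_le_iff]
      show (⟨(f x : ℕ) + 1, _⟩ : ℕ+) ≤ ⟨(f y : ℕ) + 1, _⟩ ↔ f x ≤ f y
      rw [Fin.le_iff_val_le_val]
      show (f x : ℕ) + 1 ≤ (f y : ℕ) + 1 ↔ _
      omega
  rw [linExtCount]
  exact Nat.card_eq_of_bijective Φ' hbij
end
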